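/- Let F_t be the disjoint union of t vertex-disjoint copies of the cycle C_8. Then fp(F_t) − ν_ind(F_t) = t; in particular, the gap between the Ferrers partition number and the induced matching number can be arbitrarily large. -/

import Mathlib

open SimpleGraph

/-- A graph contains an induced `2K₂`: four vertices carrying exactly two disjoint edges. -/
def Has2K2 {V : Type*} (G : SimpleGraph V) : Prop :=
  ∃ a b c d : V, G.Adj a b ∧ G.Adj c d ∧
    a ≠ c ∧ a ≠ d ∧ b ≠ c ∧ b ≠ d ∧
    ¬ G.Adj a c ∧ ¬ G.Adj a d ∧ ¬ G.Adj b c ∧ ¬ G.Adj b d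

/-- `f` assigns each edge of `G` one of `k` parts, and each part induces
an induced-`2K₂`-free (Ferrers) graph. -/
def IsFerrersPartition {V : Type*} (G : SimpleGraph V) (k : ℕ)
    (f : G.edgeSet → Fin k) : Prop :=
  ∀ i : Fin k,
    ¬ Has2K2 (SimpleGraph.fromEdgeSet {e | ∃ h : e ∈ G.edgeSet, f ⟨e, h⟩ = i})

/-- The Ferrers partition number. -/
noncomputable def fp {V : Type*} (G : SimpleGraph V) : ℕ :=
  sInf {k | ∃ f : G.edgeSet → Fin k, IsFerrersPartition G k f}

/-- `M` is an induced matching of `G`. -/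
def IsInducedMatching {V : Type*} (G : SimpleGraph V) (M : Set (Sym2 V)) : Prop :=
  M ⊆ G.edgeSet ∧
  ∀ e ∈ M, ∀ f ∈ M, e ≠ f → ∀ u ∈ e, ∀ v ∈ f, u ≠ v ∧ ¬ G.Adj u v

/-- The induced matching number. -/
noncomputable def nuInd {V : Type*} (G : SimpleGraph V) : ℕ :=
  sSup {n | ∃ M : Finset (Sym2 V), IsInducedMatching G ↑M ∧ M.card = n}

/-- The disjoint union of `t` copies of the cycle `C₈`. -/
def Ft (t : ℕ) : SimpleGraph (Fin t × Fin 8) where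
  Adj x y := x.1 = y.1 ∧ (SimpleGraph.cycleGraph 8).Adj x.2 y.2
  symm := ⟨by rintro x y ⟨h1, h2⟩; exact ⟨h1.symm, h2.symm⟩⟩
  loopless := ⟨by rintro x ⟨h1, h2⟩; exact h2.ne rfl⟩

/-! ### Preliminaries -/

def A8 (u v : Fin 8) : Prop := u - v = 1 ∨ v - u = 1

instance : DecidableRel A8 := fun u v => by unfold A8; infer_instance

lemma a8_iff {u v : Fin 8} : (cycleGraph 8).Adj u v ↔ A8 u v := cycleGraph_adj

lemma a8_succ (j : Fin 8) : A8 j (j + 1) := Or.inr (add_sub_cancel_left j 1)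

lemma ft_adj {t : ℕ} {x y : Fin t × Fin 8} :
    (Ft t).Adj x y ↔ x.1 = y.1 ∧ A8 x.2 y.2 :=
  and_congr Iff.rfl a8_iff

lemma a8_form {u v : Fin 8} (h : A8 u v) : v = u + 1 ∨ u = v + 1 := by
  rcases h with h | h
  · right; rw [sub_eq_iff_eq_add] at h; rw [h, add_comm]
  · left; rw [sub_eq_iff_eq_add] at h; rw [h, add_comm]

lemma a8_index {u v : Fin 8} (h : A8 u v) :
    ∃ x : Fin 8, (u = x ∧ v = x + 1) ∨ (u = x + 1 ∧ v = x) := by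
  rcases a8_form h with h | h
  · exact ⟨u, Or.inl ⟨rfl, h⟩⟩
  · exact ⟨v, Or.inr ⟨h, rfl⟩⟩

lemma prod_snd_ne {α β : Type*} {x y : α × β} (h : x ≠ y) (h1 : x.1 = y.1) : x.2 ≠ y.2 :=
  fun h2 => h (Prod.ext h1 h2)

/-! ### decidable core lemmas -/

def EC (x y : Fin 8) : Prop :=
  x ≠ y ∧ x ≠ y+1 ∧ x+1 ≠ y ∧ ¬A8 x y ∧ ¬A8 x (y+1) ∧ ¬A8 (x+1) y ∧ ¬A8 (x+1) (y+1)

instance : ∀ x y, Decidable (EC x y) := fun x y => by unfold EC; infer_instance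

lemma ec_triple : ∀ x y z : Fin 8, ¬(EC x y ∧ EC x z ∧ EC y z) := by decide

lemma ec_of (x y : Fin 8) {a b c d : Fin 8}
    (hab : (a = x ∧ b = x+1) ∨ (a = x+1 ∧ b = x))
    (hcd : (c = y ∧ d = y+1) ∨ (c = y+1 ∧ d = y))
    (h1 : a ≠ c) (h2 : a ≠ d) (h3 : b ≠ c) (h4 : b ≠ d)
    (n1 : ¬A8 a c) (n2 : ¬A8 a d) (n3 : ¬A8 b c) (n4 : ¬A8 b d) : EC x y := by
  rcases hab with ⟨rfl, rfl⟩ | ⟨rfl, rfl⟩ <;> rcases hcd with ⟨rfl, rfl⟩ | ⟨rfl, rfl⟩ <;>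
    refine ⟨?_, ?_, ?_, ?_, ?_, ?_, ?_⟩ <;> assumption

set_option maxRecDepth 10000 in
lemma fiber_card_le : ∀ A : Finset (Fin 8),
    (∀ j ∈ A, ∀ j' ∈ A, ((j'-j).val ≤ 2 ∨ (j-j').val ≤ 2) ∧ (j' - j = 2 → j+1 ∈ A)) →
    A.card ≤ 3 := by decide

lemma far_facts : ∀ j j' : Fin 8, ¬((j'-j).val ≤ 2 ∨ (j-j').val ≤ 2) →
    (j ≠ j' ∧ j ≠ j'+1 ∧ j+1 ≠ j' ∧ j+1 ≠ j'+1 ∧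
     ¬A8 j j' ∧ ¬A8 j (j'+1) ∧ ¬A8 (j+1) j' ∧ ¬A8 (j+1) (j'+1)) := by decide

lemma mid_facts : ∀ j j' : Fin 8, j' - j = 2 →
    (j ≠ j' ∧ j ≠ j'+1 ∧ j+1 ≠ j' ∧ j+1 ≠ j'+1 ∧
     ¬A8 j j' ∧ ¬A8 j (j'+1) ∧ ¬A8 (j+1) (j'+1) ∧ j' = (j+1)+1) := by decide

/-! ### class function for upper bound construction -/

def cls (a b : Fin 8) : ℕ :=
  if max a.val b.val ≤ 3 then 0
  else if 6 ≤ min a.val b.val ∨ (min a.val b.val = 0 ∧ max a.val b.val = 7) then 2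
  else 1

lemma cls_comm (a b : Fin 8) : cls a b = cls b a := by
  unfold cls; rw [Nat.max_comm, Nat.min_comm]

lemma cls_le (a b : Fin 8) : cls a b ≤ 2 := by
  unfold cls; split_ifs <;> omega

lemma cls_no2K2 : ∀ a b c d : Fin 8, ¬(A8 a b ∧ A8 c d ∧ cls a b = cls c d ∧
    a ≠ c ∧ a ≠ d ∧ b ≠ c ∧ b ≠ d ∧
    ¬(A8 a c ∧ cls a c = cls a b) ∧ ¬(A8 a d ∧ cls a d = cls a b) ∧
    ¬(A8 b c ∧ cls b c = cls a b) ∧ ¬(A8 b d ∧ cls b d = cls a b)) := by decide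

/-! ### nuInd lower bound: explicit induced matching -/

def stv : Fin 2 → Fin 8 := fun r => ⟨4 * r.val, by omega⟩

def Elow {t : ℕ} (q : Fin t × Fin 2) : Sym2 (Fin t × Fin 8) :=
  s((q.1, stv q.2), (q.1, stv q.2 + 1))

lemma stv_inj : ∀ r r' : Fin 2, stv r = stv r' → r = r' := by decide
lemma stv_nswap : ∀ r r' : Fin 2, ¬(stv r = stv r' + 1 ∧ stv r + 1 = stv r') := by decide
lemma stv_pairs : ∀ r r' : Fin 2, r ≠ r' → ∀ x y : Fin 8,
    (x = stv r ∨ x = stv r + 1) → (y = stv r' ∨ y = stv r' + 1) →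
    x ≠ y ∧ ¬A8 x y := by decide

lemma Elow_inj {t : ℕ} : Function.Injective (@Elow t) := by
  rintro ⟨i, r⟩ ⟨i', r'⟩ h
  unfold Elow at h
  rw [Sym2.eq_iff] at h
  rcases h with ⟨h1, h2⟩ | ⟨h1, h2⟩
  · obtain ⟨hi, hr⟩ := Prod.mk.injEq .. ▸ h1
    exact Prod.ext hi (stv_inj _ _ hr)
  · exact absurd ⟨congrArg Prod.snd h1, congrArg Prod.snd h2⟩ (stv_nswap r r')

def Mlow (t : ℕ) : Finset (Sym2 (Fin t × Fin 8)) := Finset.univ.image Elow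

lemma Mlow_card (t : ℕ) : (Mlow t).card = 2 * t := by
  rw [Mlow, Finset.card_image_of_injective _ Elow_inj, Finset.card_univ]
  simp [mul_comm]

lemma Mlow_matching (t : ℕ) : IsInducedMatching (Ft t) ↑(Mlow t) := by
  constructor
  · intro e he
    simp only [Mlow, Finset.coe_image, Set.mem_image, Finset.mem_coe, Finset.mem_univ] at he
    obtain ⟨q, -, rfl⟩ := he
    exact (Ft t).mem_edgeSet.mpr (ft_adj.mpr ⟨rfl, a8_succ _⟩)
  · intro e he f hf hne u hu v hv
    simp only [Finset.mem_coe, Mlow, Finset.mem_image, Finset.mem_univ, true_and] at he hf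
    obtain ⟨q, rfl⟩ := he
    obtain ⟨q', rfl⟩ := hf
    rw [Elow, Sym2.mem_iff] at hu hv
    have hu1 : u.1 = q.1 := by rcases hu with rfl | rfl <;> rfl
    have hv1 : v.1 = q'.1 := by rcases hv with rfl | rfl <;> rfl
    have hu2 : u.2 = stv q.2 ∨ u.2 = stv q.2 + 1 := by rcases hu with rfl | rfl <;> simp
    have hv2 : v.2 = stv q'.2 ∨ v.2 = stv q'.2 + 1 := by rcases hv with rfl | rfl <;> simp
    by_cases hq : q.1 = q'.1
    · have hr : q.2 ≠ q'.2 := by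
        intro h2; exact hne (congrArg Elow (Prod.ext hq h2))
      obtain ⟨hxy, hA⟩ := stv_pairs q.2 q'.2 hr u.2 v.2 hu2 hv2
      refine ⟨fun h => hxy (congrArg Prod.snd h), fun h => hA (ft_adj.mp h).2⟩
    · have h1 : u.1 ≠ v.1 := by rw [hu1, hv1]; exact hq
      exact ⟨fun h => h1 (congrArg Prod.fst h), fun h => h1 (ft_adj.mp h).1⟩

/-! ### nuInd upper bound -/

lemma nu_ub {t : ℕ} (M : Finset (Sym2 (Fin t × Fin 8)))
    (hM : IsInducedMatching (Ft t) ↑M) : M.card ≤ 2 * t := by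
  obtain ⟨hsub, hind⟩ := hM
  -- each member, via its canonical representative
  have hrep : ∀ e ∈ M, (Ft t).Adj (Quot.out e).1 (Quot.out e).2 := by
    intro e he
    have hE : e ∈ (Ft t).edgeSet := hsub he
    have : s((Quot.out e).1, (Quot.out e).2) = e := by
      rw [Sym2.mk]; exact Quot.out_eq e
    rw [← this] at hE
    exact (Ft t).mem_edgeSet.mp hE
  classical
  have key : ∀ i : Fin t, (M.filter (fun e => (Quot.out e).1.1 = i)).card ≤ 2 := by
    intro i
    by_contra hlt
    push_neg at hlt
    obtain ⟨e1, e2, e3, he1, he2, he3, h12, h13, h23⟩ := Finset.two_lt_card_iff.mp hlt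
    rw [Finset.mem_filter] at he1 he2 he3
    -- data for each edge
    have dat : ∀ e, e ∈ M ∧ (Quot.out e).1.1 = i →
        ∃ x : Fin 8, ((Quot.out e).1.2 = x ∧ (Quot.out e).2.2 = x + 1) ∨
          ((Quot.out e).1.2 = x + 1 ∧ (Quot.out e).2.2 = x) := by
      rintro e ⟨he, -⟩
      exact a8_index (ft_adj.mp (hrep e he)).2
    obtain ⟨x1, hx1⟩ := dat e1 he1
    obtain ⟨x2, hx2⟩ := dat e2 he2
    obtain ⟨x3, hx3⟩ := dat e3 he3
    -- pairwise compat facts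
    have cmp : ∀ e f, e ∈ M ∧ (Quot.out e).1.1 = i → f ∈ M ∧ (Quot.out f).1.1 = i → e ≠ f →
        ((Quot.out e).1.2 ≠ (Quot.out f).1.2 ∧ (Quot.out e).1.2 ≠ (Quot.out f).2.2 ∧
         (Quot.out e).2.2 ≠ (Quot.out f).1.2 ∧ (Quot.out e).2.2 ≠ (Quot.out f).2.2 ∧
         ¬A8 (Quot.out e).1.2 (Quot.out f).1.2 ∧ ¬A8 (Quot.out e).1.2 (Quot.out f).2.2 ∧
         ¬A8 (Quot.out e).2.2 (Quot.out f).1.2 ∧ ¬A8 (Quot.out e).2.2 (Quot.out f).2.2) := by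
      rintro e f ⟨he, hei⟩ ⟨hf, hfi⟩ hne
      have adje := ft_adj.mp (hrep e he)
      have adjf := ft_adj.mp (hrep f hf)
      have copyeq : ∀ u v : Fin t × Fin 8, u.1 = i → v.1 = i → u ≠ v → u.2 ≠ v.2 := by
        intro u v hu hv h
        exact prod_snd_ne h (hu.trans hv.symm)
      have meme1 : (Quot.out e).1 ∈ e := Sym2.out_fst_mem e
      have meme2 : (Quot.out e).2 ∈ e := Sym2.out_snd_mem e
      have memf1 : (Quot.out f).1 ∈ f := Sym2.out_fst_mem f
      have memf2 : (Quot.out f).2 ∈ f := Sym2.out_snd_mem f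
      obtain ⟨d11, n11⟩ := hind e he f hf hne _ meme1 _ memf1
      obtain ⟨d12, n12⟩ := hind e he f hf hne _ meme1 _ memf2
      obtain ⟨d21, n21⟩ := hind e he f hf hne _ meme2 _ memf1
      obtain ⟨d22, n22⟩ := hind e he f hf hne _ meme2 _ memf2
      have c1e : (Quot.out e).1.1 = i := hei
      have c2e : (Quot.out e).2.1 = i := adje.1 ▸ hei
      have c1f : (Quot.out f).1.1 = i := hfi
      have c2f : (Quot.out f).2.1 = i := adjf.1 ▸ hfi
      refine ⟨copyeq _ _ c1e c1f d11, copyeq _ _ c1e c2f d12,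
        copyeq _ _ c2e c1f d21, copyeq _ _ c2e c2f d22, ?_, ?_, ?_, ?_⟩
      · exact fun h => n11 (ft_adj.mpr ⟨c1e.trans c1f.symm, h⟩)
      · exact fun h => n12 (ft_adj.mpr ⟨c1e.trans c2f.symm, h⟩)
      · exact fun h => n21 (ft_adj.mpr ⟨c2e.trans c1f.symm, h⟩)
      · exact fun h => n22 (ft_adj.mpr ⟨c2e.trans c2f.symm, h⟩)
    obtain ⟨a12, b12, c12, d12, e12, f12, g12, i12⟩ := cmp e1 e2 he1 he2 h12
    obtain ⟨a13, b13, c13, d13, e13, f13, g13, i13⟩ := cmp e1 e3 he1 he3 h13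
    obtain ⟨a23, b23, c23, d23, e23, f23, g23, i23⟩ := cmp e2 e3 he2 he3 h23
    exact ec_triple x1 x2 x3
      ⟨ec_of x1 x2 hx1 hx2 a12 b12 c12 d12 e12 f12 g12 i12,
       ec_of x1 x3 hx1 hx3 a13 b13 c13 d13 e13 f13 g13 i13,
       ec_of x2 x3 hx2 hx3 a23 b23 c23 d23 e23 f23 g23 i23⟩
  calc M.card = ∑ i : Fin t, (M.filter (fun e => (Quot.out e).1.1 = i)).card :=
        Finset.card_eq_sum_card_fiberwise (fun e _ => Finset.mem_univ _)
    _ ≤ ∑ _i : Fin t, 2 := Finset.sum_le_sum (fun i _ => key i)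
    _ = 2 * t := by simp [mul_comm]

lemma nuInd_eq (t : ℕ) : nuInd (Ft t) = 2 * t := by
  have hmem : 2 * t ∈ {n | ∃ M : Finset (Sym2 (Fin t × Fin 8)),
      IsInducedMatching (Ft t) ↑M ∧ M.card = n} :=
    ⟨Mlow t, Mlow_matching t, Mlow_card t⟩
  have hub : ∀ n ∈ {n | ∃ M : Finset (Sym2 (Fin t × Fin 8)),
      IsInducedMatching (Ft t) ↑M ∧ M.card = n}, n ≤ 2 * t := by
    rintro n ⟨M, hM, rfl⟩
    exact nu_ub M hM
  exact le_antisymm (csSup_le ⟨2 * t, hmem⟩ hub) (le_csSup ⟨2 * t, hub⟩ hmem)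

/-! ### fp: part-graph adjacency characterization -/

lemma H_adj {t k : ℕ} (f : (Ft t).edgeSet → Fin k) (p : Fin k) {x y : Fin t × Fin 8} :
    (SimpleGraph.fromEdgeSet {e | ∃ h : e ∈ (Ft t).edgeSet, f ⟨e, h⟩ = p}).Adj x y ↔
      ∃ h : (Ft t).Adj x y, f ⟨s(x, y), (Ft t).mem_edgeSet.mpr h⟩ = p := by
  rw [fromEdgeSet_adj]
  constructor
  · rintro ⟨⟨h, hf⟩, -⟩
    exact ⟨(Ft t).mem_edgeSet.mp h, hf⟩
  · rintro ⟨h, hf⟩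
    exact ⟨⟨(Ft t).mem_edgeSet.mpr h, hf⟩, h.ne⟩

/-! ### fp upper bound: explicit Ferrers partition -/

def pfun (t : ℕ) : Sym2 (Fin t × Fin 8) → ℕ :=
  Sym2.lift ⟨fun x y => 3 * (min x.1 y.1).val + cls x.2 y.2, by
    intro x y
    show 3 * (min x.1 y.1).val + cls x.2 y.2 = 3 * (min y.1 x.1).val + cls y.2 x.2
    rw [min_comm, cls_comm]⟩

lemma pfun_mk {t : ℕ} (x y : Fin t × Fin 8) :
    pfun t s(x, y) = 3 * (min x.1 y.1).val + cls x.2 y.2 := rfl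

lemma pfun_lt {t : ℕ} : ∀ e ∈ (Ft t).edgeSet, pfun t e < 3 * t := by
  intro e
  induction e using Sym2.ind with
  | _ x y =>
    intro he
    rw [(Ft t).mem_edgeSet, ft_adj] at he
    rw [pfun_mk, he.1, min_self]
    have h1 := cls_le x.2 y.2
    have h2 := y.1.isLt
    omega

noncomputable def fF (t : ℕ) : (Ft t).edgeSet → Fin (3 * t) :=
  fun e => ⟨pfun t e.1, pfun_lt e.1 e.2⟩

lemma ferrers_fF (t : ℕ) : IsFerrersPartition (Ft t) (3 * t) (fF t) := by
  intro p hcon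
  obtain ⟨a, b, c, d, hab, hcd, ne1, ne2, ne3, ne4, nac, nad, nbc, nbd⟩ := hcon
  rw [H_adj] at hab hcd nac nad nbc nbd
  obtain ⟨hab, habp⟩ := hab
  obtain ⟨hcd, hcdp⟩ := hcd
  obtain ⟨hab1, hab2⟩ := ft_adj.mp hab
  obtain ⟨hcd1, hcd2⟩ := ft_adj.mp hcd
  have habv : 3 * a.1.val + cls a.2 b.2 = p.val := by
    have := congrArg Fin.val habp
    rwa [show ((fF t) ⟨s(a,b), _⟩).val = pfun t s(a,b) from rfl, pfun_mk, ← hab1, min_self] at this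
  have hcdv : 3 * c.1.val + cls c.2 d.2 = p.val := by
    have := congrArg Fin.val hcdp
    rwa [show ((fF t) ⟨s(c,d), _⟩).val = pfun t s(c,d) from rfl, pfun_mk, ← hcd1, min_self] at this
  have hle1 := cls_le a.2 b.2
  have hle2 := cls_le c.2 d.2
  have hcopy : a.1 = c.1 := Fin.ext (by omega)
  have hclseq : cls a.2 b.2 = cls c.2 d.2 := by omega
  -- all four vertices share the copy a.1
  have hb1 : b.1 = a.1 := hab1.symm
  have hc1 : c.1 = a.1 := hcopy.symm
  have hd1 : d.1 = a.1 := hcd1.symm.trans hc1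
  -- translate non-adjacency
  have key : ∀ u v : Fin t × Fin 8, u.1 = a.1 → v.1 = a.1 →
      (¬ ∃ h : (Ft t).Adj u v, (fF t) ⟨s(u, v), (Ft t).mem_edgeSet.mpr h⟩ = p) →
      ¬(A8 u.2 v.2 ∧ cls u.2 v.2 = cls a.2 b.2) := by
    rintro u v hu hv hn ⟨hA, hcl⟩
    apply hn
    refine ⟨ft_adj.mpr ⟨hu.trans hv.symm, hA⟩, ?_⟩
    apply Fin.ext
    rw [show ((fF t) ⟨s(u,v), _⟩).val = pfun t s(u,v) from rfl, pfun_mk, hu, hv, min_self]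
    omega
  exact cls_no2K2 a.2 b.2 c.2 d.2
    ⟨hab2, hcd2, hclseq,
     prod_snd_ne ne1 (hc1.symm ▸ rfl : a.1 = c.1),
     prod_snd_ne ne2 (hd1.symm ▸ rfl : a.1 = d.1),
     prod_snd_ne ne3 (by rw [hb1, hc1]),
     prod_snd_ne ne4 (by rw [hb1, hd1]),
     key a c rfl hc1 nac, key a d rfl hd1 nad,
     key b c hb1 hc1 nbc, key b d hb1 hd1 nbd⟩

/-! ### fp lower bound -/

section Lower

variable {t k : ℕ} (f : (Ft t).edgeSet → Fin k)

def ed (i : Fin t) (j : Fin 8) : (Ft t).edgeSet :=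
  ⟨s((i, j), (i, j + 1)), (Ft t).mem_edgeSet.mpr (ft_adj.mpr ⟨rfl, a8_succ j⟩)⟩

def gi (i : Fin t) (j : Fin 8) : Fin k := f (ed i j)

lemma partA (hf : IsFerrersPartition (Ft t) k f) (i : Fin t) (j j' : Fin 8)
    (heq : gi f i j = gi f i j') : (j' - j).val ≤ 2 ∨ (j - j').val ≤ 2 := by
  by_contra hbad
  obtain ⟨d1, d2, d3, d4, n1, n2, n3, n4⟩ := far_facts j j' hbad
  apply hf (gi f i j)
  refine ⟨(i, j), (i, j + 1), (i, j'), (i, j' + 1), ?_, ?_, ?_, ?_, ?_, ?_, ?_, ?_, ?_, ?_⟩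
  · exact (H_adj f _).mpr ⟨ft_adj.mpr ⟨rfl, a8_succ j⟩, rfl⟩
  · exact (H_adj f _).mpr ⟨ft_adj.mpr ⟨rfl, a8_succ j'⟩, heq.symm⟩
  · exact fun h => d1 (congrArg Prod.snd h)
  · exact fun h => d2 (congrArg Prod.snd h)
  · exact fun h => d3 (congrArg Prod.snd h)
  · exact fun h => d4 (congrArg Prod.snd h)
  · exact fun h => n1 (ft_adj.mp ((H_adj f _).mp h).1).2
  · exact fun h => n2 (ft_adj.mp ((H_adj f _).mp h).1).2
  · exact fun h => n3 (ft_adj.mp ((H_adj f _).mp h).1).2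
  · exact fun h => n4 (ft_adj.mp ((H_adj f _).mp h).1).2

lemma partB (hf : IsFerrersPartition (Ft t) k f) (i : Fin t) (j j' : Fin 8)
    (heq : gi f i j = gi f i j') (hd : j' - j = 2) : gi f i (j + 1) = gi f i j := by
  by_contra hmid
  obtain ⟨d1, d2, d3, d4, n1, n2, n4, hj'⟩ := mid_facts j j' hd
  apply hf (gi f i j)
  refine ⟨(i, j), (i, j + 1), (i, j'), (i, j' + 1), ?_, ?_, ?_, ?_, ?_, ?_, ?_, ?_, ?_, ?_⟩
  · exact (H_adj f _).mpr ⟨ft_adj.mpr ⟨rfl, a8_succ j⟩, rfl⟩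
  · exact (H_adj f _).mpr ⟨ft_adj.mpr ⟨rfl, a8_succ j'⟩, heq.symm⟩
  · exact fun h => d1 (congrArg Prod.snd h)
  · exact fun h => d2 (congrArg Prod.snd h)
  · exact fun h => d3 (congrArg Prod.snd h)
  · exact fun h => d4 (congrArg Prod.snd h)
  · exact fun h => n1 (ft_adj.mp ((H_adj f _).mp h).1).2
  · exact fun h => n2 (ft_adj.mp ((H_adj f _).mp h).1).2
  · -- the bridging pair (j+1, j'): j' = (j+1)+1, so this edge is ed i (j+1)
    intro h
    obtain ⟨hadj, hfeq⟩ := (H_adj f _).mp h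
    apply hmid
    subst hj'
    exact hfeq
  · exact fun h => n4 (ft_adj.mp ((H_adj f _).mp h).1).2

lemma partC (hf : IsFerrersPartition (Ft t) k f) (i i' : Fin t) (hne : i ≠ i')
    (j j' : Fin 8) : gi f i j ≠ gi f i' j' := by
  intro heq
  apply hf (gi f i j)
  refine ⟨(i, j), (i, j + 1), (i', j'), (i', j' + 1), ?_, ?_, ?_, ?_, ?_, ?_, ?_, ?_, ?_, ?_⟩
  · exact (H_adj f _).mpr ⟨ft_adj.mpr ⟨rfl, a8_succ j⟩, rfl⟩
  · exact (H_adj f _).mpr ⟨ft_adj.mpr ⟨rfl, a8_succ j'⟩, heq.symm⟩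
  · exact fun h => hne (congrArg Prod.fst h)
  · exact fun h => hne (congrArg Prod.fst h)
  · exact fun h => hne (congrArg Prod.fst h)
  · exact fun h => hne (congrArg Prod.fst h)
  · exact fun h => hne (ft_adj.mp ((H_adj f _).mp h).1).1
  · exact fun h => hne (ft_adj.mp ((H_adj f _).mp h).1).1
  · exact fun h => hne (ft_adj.mp ((H_adj f _).mp h).1).1
  · exact fun h => hne (ft_adj.mp ((H_adj f _).mp h).1).1

lemma fp_lower (hf : IsFerrersPartition (Ft t) k f) : 3 * t ≤ k := by
  classical
  set S : Fin t → Finset (Fin k) := fun i => Finset.univ.image (gi f i) with hS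
  have hScard : ∀ i, 3 ≤ (S i).card := by
    intro i
    have hfib : ∀ p ∈ S i, (Finset.univ.filter (fun j => gi f i j = p)).card ≤ 3 := by
      intro p hp
      apply fiber_card_le
      intro j hj j' hj'
      rw [Finset.mem_filter] at hj hj'
      constructor
      · exact partA f hf i j j' (hj.2.trans hj'.2.symm)
      · intro hd
        rw [Finset.mem_filter]
        exact ⟨Finset.mem_univ _, (partB f hf i j j' (hj.2.trans hj'.2.symm) hd).trans hj.2⟩
    have h8 : (Finset.univ : Finset (Fin 8)).card =
        ∑ p ∈ S i, (Finset.univ.filter (fun j => gi f i j = p)).card :=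
      Finset.card_eq_sum_card_fiberwise (fun j _ => Finset.mem_image_of_mem _ (Finset.mem_univ j))
    have hle : ∑ p ∈ S i, (Finset.univ.filter (fun j => gi f i j = p)).card ≤
        ∑ _p ∈ S i, 3 := Finset.sum_le_sum hfib
    rw [Finset.sum_const] at hle
    simp only [Finset.card_univ, Fintype.card_fin, smul_eq_mul] at h8 hle
    omega
  have hdisj : ∀ i ∈ (Finset.univ : Finset (Fin t)), ∀ i' ∈ (Finset.univ : Finset (Fin t)),
      i ≠ i' → Disjoint (S i) (S i') := by
    intro i _ i' _ hne
    rw [Finset.disjoint_left]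
    intro p hp hp'
    simp only [hS, Finset.mem_image, Finset.mem_univ, true_and] at hp hp'
    obtain ⟨j, rfl⟩ := hp
    obtain ⟨j', hj'⟩ := hp'
    exact partC f hf i' i (Ne.symm hne) j' j hj'
  calc 3 * t = ∑ _i : Fin t, 3 := by simp [mul_comm]
    _ ≤ ∑ i : Fin t, (S i).card := Finset.sum_le_sum (fun i _ => hScard i)
    _ = (Finset.univ.biUnion S).card := (Finset.card_biUnion hdisj).symm
    _ ≤ (Finset.univ : Finset (Fin k)).card := Finset.card_le_univ _
    _ = k := by simp

end Lower

lemma fp_eq (t : ℕ) : fp (Ft t) = 3 * t := by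
  have hmem : 3 * t ∈ {n | ∃ f : (Ft t).edgeSet → Fin n, IsFerrersPartition (Ft t) n f} :=
    ⟨fF t, ferrers_fF t⟩
  refine le_antisymm (Nat.sInf_le hmem) (le_csInf ⟨3 * t, hmem⟩ ?_)
  rintro n ⟨f, hf⟩
  exact fp_lower f hf

/-- For the disjoint union of `t` copies of `C₈`, the gap between the Ferrers
partition number and the induced matching number is exactly `t`. -/
theorem stmt12 (t : ℕ) : fp (Ft t) - nuInd (Ft t) = t := by
  rw [fp_eq, nuInd_eq]
  omega
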